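/- arXiv:2403.19089 — 3 statements merged into one kernel-verified Lean document; each statement's English description precedes it below -/
import Mathlib

section
/- For 0 < α ≤ 1, the integral Ψ(α) = ∫₀¹ ∫_{-∞}^∞ ∫_{-∞}^∞ exp(-(r² + r'² - 2rr't α)/2) dr dr' dt equals 2π · arcsin(α)/α, and hence Ψ(α) ≤ π². Consequently the function ψ_2(α) = ∫₀¹ ∫₀^∞ ∫₀^∞ exp(-(r² + r'² - 2rr't α)/2) dr dr' dt satisfies ψ_2(α) ≤ π² for all α ∈ [-1,1]. -/
open MeasureTheory Real

/-- `Ψ(α)`: the triple integral with `r, r'` ranging over all of `ℝ`. -/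
noncomputable def bigPsi (α : ℝ) : ℝ :=
  ∫ t in Set.Ioo (0 : ℝ) 1,
    ∫ r : ℝ, ∫ r' : ℝ, Real.exp (-(r ^ 2 + r' ^ 2 - 2 * r * r' * t * α) / 2)

/-- `ψ₂(α)`: the triple integral with `r, r'` ranging over `(0,∞)`. -/
noncomputable def psiTwo (α : ℝ) : ℝ :=
  ∫ t in Set.Ioo (0 : ℝ) 1,
    ∫ r in Set.Ioi (0 : ℝ), ∫ r' in Set.Ioi (0 : ℝ),
      Real.exp (-(r ^ 2 + r' ^ 2 - 2 * r * r' * t * α) / 2)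

section Aux

open Set Filter


-- factorization of the exponent
lemma exp_factor (s r r' : ℝ) :
    Real.exp (-(r ^ 2 + r' ^ 2 - 2 * r * r' * s) / 2)
      = Real.exp (-(2⁻¹ : ℝ) * (r' - r * s) ^ 2) * Real.exp (-((1 - s ^ 2) * r ^ 2) / 2) := by
  rw [← Real.exp_add]; congr 1; ring

lemma gauss_inner (s r : ℝ) :
    (∫ r' : ℝ, Real.exp (-(r ^ 2 + r' ^ 2 - 2 * r * r' * s) / 2))
      = Real.sqrt (2 * π) * Real.exp (-((1 - s ^ 2) * r ^ 2) / 2) := by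
  simp only [exp_factor s r]
  rw [integral_mul_const _]
  congr 1
  have := MeasureTheory.integral_sub_right_eq_self
    (μ := (volume : Measure ℝ)) (fun x => Real.exp (-(2⁻¹ : ℝ) * x ^ 2)) (r * s)
  rw [this, integral_gaussian]
  norm_num [Real.sqrt_eq_iff_eq_sq, mul_comm]

lemma integrable_inner (s r : ℝ) :
    Integrable (fun r' : ℝ => Real.exp (-(r ^ 2 + r' ^ 2 - 2 * r * r' * s) / 2)) := by
  simp only [exp_factor s r]
  exact (((integrable_exp_neg_mul_sq (by norm_num : (0:ℝ) < 2⁻¹)).comp_sub_right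
    (r * s))).mul_const _

lemma integrable_G {s : ℝ} (hs : s ^ 2 < 1) :
    Integrable (fun r : ℝ => Real.sqrt (2 * π) * Real.exp (-((1 - s ^ 2) * r ^ 2) / 2)) := by
  have hb : (0:ℝ) < (1 - s ^ 2) / 2 := by linarith
  have : ∀ r : ℝ, Real.exp (-((1 - s ^ 2) * r ^ 2) / 2)
      = Real.exp (-((1 - s ^ 2) / 2) * r ^ 2) := by intro r; congr 1; ring
  simp only [this]
  exact (integrable_exp_neg_mul_sq hb).const_mul _

lemma gauss_double (s : ℝ) (hs : s ^ 2 < 1) :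
    (∫ r : ℝ, ∫ r' : ℝ, Real.exp (-(r ^ 2 + r' ^ 2 - 2 * r * r' * s) / 2))
      = 2 * π / Real.sqrt (1 - s ^ 2) := by
  have hb : (0:ℝ) < (1 - s ^ 2) / 2 := by linarith
  simp only [gauss_inner]
  have : ∀ r : ℝ, Real.exp (-((1 - s ^ 2) * r ^ 2) / 2)
      = Real.exp (-((1 - s ^ 2) / 2) * r ^ 2) := by intro r; congr 1; ring
  simp only [this]
  rw [integral_const_mul _ _, integral_gaussian]
  have h2 : (1:ℝ) - s ^ 2 ≠ 0 := by nlinarith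
  rw [show π / ((1 - s ^ 2) / 2) = 2 * π / (1 - s ^ 2) by field_simp]
  rw [Real.sqrt_div (by positivity : (0:ℝ) ≤ 2 * π), ← mul_div_assoc,
    Real.mul_self_sqrt (by positivity)]

lemma integrable_one_div (α : ℝ) (h0 : 0 < α) (h1 : α ≤ 1) :
    IntegrableOn (fun t : ℝ => 1 / Real.sqrt (1 - (t * α) ^ 2)) (Ioo 0 1) := by
  -- dominating function (1-t)^(-1/2)
  have hdom : IntervalIntegrable (fun t : ℝ => (1 - t) ^ (-(1/2) : ℝ)) volume 0 1 := by
    have := (intervalIntegral.intervalIntegrable_rpow' (a := 0) (b := 1)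
      (by norm_num : (-1:ℝ) < -(1/2))).comp_sub_left 1
    simpa using this.symm
  have hdom' : IntegrableOn (fun t : ℝ => (1 - t) ^ (-(1/2) : ℝ)) (Ioo 0 1) := by
    have := (intervalIntegrable_iff_integrableOn_Ioo_of_le (by norm_num : (0:ℝ) ≤ 1)).mp hdom
    exact this
  refine hdom'.mono' ?_ ?_
  · apply Measurable.aestronglyMeasurable
    fun_prop
  · filter_upwards [ae_restrict_mem measurableSet_Ioo] with t ht
    obtain ⟨ht0, ht1⟩ := ht
    have htα : 0 < t * α := mul_pos ht0 h0
    have htα1 : t * α < 1 := by nlinarith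
    have hlt : (t * α) ^ 2 < 1 := by nlinarith
    have hge : 1 - t ≤ 1 - (t * α) ^ 2 := by nlinarith
    have hpos : 0 < Real.sqrt (1 - (t * α) ^ 2) := Real.sqrt_pos.mpr (by linarith)
    rw [Real.norm_eq_abs, abs_of_nonneg (by positivity)]
    rw [Real.rpow_neg (by linarith : (0:ℝ) ≤ 1 - t), ← Real.sqrt_eq_rpow, one_div]
    apply inv_anti₀
    · exact Real.sqrt_pos.mpr (by linarith)
    · exact Real.sqrt_le_sqrt hge

lemma ftc_arcsin (α : ℝ) (h0 : 0 < α) (h1 : α ≤ 1) :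
    (∫ t in Ioo (0:ℝ) 1, α * (1 / Real.sqrt (1 - (t * α) ^ 2))) = Real.arcsin α := by
  have hint : IntervalIntegrable (fun t : ℝ => α * (1 / Real.sqrt (1 - (t * α) ^ 2)))
      volume 0 1 := by
    rw [intervalIntegrable_iff_integrableOn_Ioo_of_le (by norm_num : (0:ℝ) ≤ 1)]
    exact (integrable_one_div α h0 h1).const_mul α
  have hderiv : ∀ x ∈ Ioo (0:ℝ) 1,
      HasDerivAt (fun u : ℝ => Real.arcsin (α * u))
        (α * (1 / Real.sqrt (1 - (x * α) ^ 2))) x := by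
    intro x hx
    have hx1 : α * x < 1 := by nlinarith [hx.1, hx.2]
    have hx2 : -1 < α * x := by nlinarith [hx.1, hx.2]
    have := (Real.hasDerivAt_arcsin (ne_of_gt hx2) (ne_of_lt hx1)).comp x
      ((hasDerivAt_id x).const_mul α)
    simpa [mul_comm, mul_one, Function.comp_def] using this
  have h0' : Filter.Tendsto (fun u : ℝ => Real.arcsin (α * u)) (nhdsWithin 0 (Ioi 0))
      (nhds 0) := by
    have : Continuous (fun u : ℝ => Real.arcsin (α * u)) :=
      Real.continuous_arcsin.comp (continuous_const.mul continuous_id)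
    simpa using (this.tendsto 0).mono_left nhdsWithin_le_nhds
  have h1' : Filter.Tendsto (fun u : ℝ => Real.arcsin (α * u)) (nhdsWithin 1 (Iio 1))
      (nhds (Real.arcsin α)) := by
    have : Continuous (fun u : ℝ => Real.arcsin (α * u)) :=
      Real.continuous_arcsin.comp (continuous_const.mul continuous_id)
    simpa using (this.tendsto 1).mono_left nhdsWithin_le_nhds
  have := intervalIntegral.integral_eq_sub_of_hasDerivAt_of_tendsto (by norm_num : (0:ℝ) < 1)
    hderiv hint h0' h1'
  rw [intervalIntegral.integral_of_le (by norm_num : (0:ℝ) ≤ 1)] at this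
  rw [← MeasureTheory.integral_Ioc_eq_integral_Ioo]
  simp only [this]
  simp


lemma bigPsi_eq_integral (α : ℝ) (h0 : 0 < α) (h1 : α ≤ 1) :
    bigPsi α = ∫ t in Ioo (0:ℝ) 1, 2 * π * (1 / Real.sqrt (1 - (t * α) ^ 2)) := by
  unfold bigPsi
  apply setIntegral_congr_fun measurableSet_Ioo
  intro t ht
  obtain ⟨ht0, ht1⟩ := ht
  have htα : 0 < t * α := mul_pos ht0 h0
  have htα1 : t * α < 1 := by nlinarith
  have hs : (t * α) ^ 2 < 1 := by nlinarith
  have : ∀ r r' : ℝ, -(r ^ 2 + r' ^ 2 - 2 * r * r' * t * α) / 2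
      = -(r ^ 2 + r' ^ 2 - 2 * r * r' * (t * α)) / 2 := by intro r r'; ring
  simp only [this]
  rw [gauss_double (t * α) hs]
  rw [mul_one_div, mul_div_assoc]

lemma bigPsi_val (α : ℝ) (h0 : 0 < α) (h1 : α ≤ 1) :
    bigPsi α = 2 * π * Real.arcsin α / α := by
  rw [bigPsi_eq_integral α h0 h1]
  have : ∀ t : ℝ, 2 * π * (1 / Real.sqrt (1 - (t * α) ^ 2))
      = (2 * π / α) * (α * (1 / Real.sqrt (1 - (t * α) ^ 2))) := by
    intro t; field_simp
  simp only [this]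
  rw [integral_const_mul, ftc_arcsin α h0 h1]
  ring

lemma bigPsi_le (α : ℝ) (h0 : 0 < α) (h1 : α ≤ 1) : bigPsi α ≤ π ^ 2 := by
  have key : bigPsi α ≤ bigPsi 1 := by
    rw [bigPsi_eq_integral α h0 h1, bigPsi_eq_integral 1 one_pos le_rfl]
    apply setIntegral_mono_on
    · exact ((integrable_one_div α h0 h1).const_mul _)
    · exact ((integrable_one_div 1 one_pos le_rfl).const_mul _)
    · exact measurableSet_Ioo
    · intro t ht
      obtain ⟨ht0, ht1⟩ := ht
      have h1t : (0:ℝ) < 1 - t ^ 2 := by nlinarith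
      have hα2 : α ^ 2 ≤ 1 := by nlinarith
      have hle : (t * α) ^ 2 ≤ t ^ 2 := by nlinarith [sq_nonneg t, mul_nonneg (sq_nonneg t) (by linarith : (0:ℝ) ≤ 1 - α ^ 2)]
      have : Real.sqrt (1 - t ^ 2) ≤ Real.sqrt (1 - (t * α) ^ 2) := by
        apply Real.sqrt_le_sqrt; nlinarith
      have hpos : 0 < Real.sqrt (1 - t ^ 2) := Real.sqrt_pos.mpr h1t
      have : (1:ℝ) / Real.sqrt (1 - (t * α) ^ 2) ≤ 1 / Real.sqrt (1 - (t * (1:ℝ)) ^ 2) := by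
        rw [mul_one]
        apply one_div_le_one_div_of_le hpos this
      nlinarith [Real.pi_pos, this]
  calc bigPsi α ≤ bigPsi 1 := key
    _ = π ^ 2 := by
        rw [bigPsi_val 1 one_pos le_rfl, Real.arcsin_one]; ring


lemma psiTwo_le (α : ℝ) (hα : α ∈ Icc (-1:ℝ) 1) : psiTwo α ≤ π ^ 2 := by
  obtain ⟨hα1, hα2⟩ := hα
  unfold psiTwo
  have key : ∀ t ∈ Ioo (0:ℝ) 1,
      (∫ r in Ioi (0:ℝ), ∫ r' in Ioi (0:ℝ),
        Real.exp (-(r ^ 2 + r' ^ 2 - 2 * r * r' * t * α) / 2))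
      ≤ 2 * π * (1 / Real.sqrt (1 - (t * 1) ^ 2)) := by
    intro t ht
    obtain ⟨ht0, ht1⟩ := ht
    have hs : t ^ 2 < 1 := by nlinarith
    -- the dominating function in r
    have hGint : Integrable (fun r : ℝ =>
        ∫ r' : ℝ, Real.exp (-(r ^ 2 + r' ^ 2 - 2 * r * r' * t) / 2)) := by
      have : (fun r : ℝ => ∫ r' : ℝ, Real.exp (-(r ^ 2 + r' ^ 2 - 2 * r * r' * t) / 2))
          = fun r : ℝ => Real.sqrt (2 * π) * Real.exp (-((1 - t ^ 2) * r ^ 2) / 2) := by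
        funext r; exact gauss_inner t r
      rw [this]
      exact integrable_G hs
    have step1 : ∀ r ∈ Ioi (0:ℝ),
        (∫ r' in Ioi (0:ℝ), Real.exp (-(r ^ 2 + r' ^ 2 - 2 * r * r' * t * α) / 2))
        ≤ ∫ r' : ℝ, Real.exp (-(r ^ 2 + r' ^ 2 - 2 * r * r' * t) / 2) := by
      intro r hr
      rw [mem_Ioi] at hr
      have le1 : (∫ r' in Ioi (0:ℝ), Real.exp (-(r ^ 2 + r' ^ 2 - 2 * r * r' * t * α) / 2))
          ≤ ∫ r' in Ioi (0:ℝ), Real.exp (-(r ^ 2 + r' ^ 2 - 2 * r * r' * t) / 2) := by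
        apply integral_mono_of_nonneg
        · filter_upwards with r' using Real.exp_nonneg _
        · exact (integrable_inner t r).integrableOn
        · filter_upwards [ae_restrict_mem measurableSet_Ioi] with r' hr'
          rw [mem_Ioi] at hr'
          apply Real.exp_le_exp.mpr
          have : r * r' * t * (1 - α) ≥ 0 := by
            apply mul_nonneg (mul_nonneg (mul_nonneg hr.le hr'.le) ht0.le); linarith
          nlinarith
      have le2 : (∫ r' in Ioi (0:ℝ), Real.exp (-(r ^ 2 + r' ^ 2 - 2 * r * r' * t) / 2))
          ≤ ∫ r' : ℝ, Real.exp (-(r ^ 2 + r' ^ 2 - 2 * r * r' * t) / 2) :=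
        setIntegral_le_integral (integrable_inner t r)
          (by filter_upwards with r' using Real.exp_nonneg _)
      linarith
    have step2 : (∫ r in Ioi (0:ℝ), ∫ r' in Ioi (0:ℝ),
        Real.exp (-(r ^ 2 + r' ^ 2 - 2 * r * r' * t * α) / 2))
        ≤ ∫ r : ℝ, ∫ r' : ℝ, Real.exp (-(r ^ 2 + r' ^ 2 - 2 * r * r' * t) / 2) := by
      have le1 : (∫ r in Ioi (0:ℝ), ∫ r' in Ioi (0:ℝ),
          Real.exp (-(r ^ 2 + r' ^ 2 - 2 * r * r' * t * α) / 2))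
          ≤ ∫ r in Ioi (0:ℝ), ∫ r' : ℝ,
            Real.exp (-(r ^ 2 + r' ^ 2 - 2 * r * r' * t) / 2) := by
        apply integral_mono_of_nonneg
        · filter_upwards with r using
            integral_nonneg fun r' => Real.exp_nonneg _
        · exact hGint.integrableOn
        · filter_upwards [ae_restrict_mem measurableSet_Ioi] with r hr using step1 r hr
      have le2 : (∫ r in Ioi (0:ℝ), ∫ r' : ℝ,
          Real.exp (-(r ^ 2 + r' ^ 2 - 2 * r * r' * t) / 2))
          ≤ ∫ r : ℝ, ∫ r' : ℝ, Real.exp (-(r ^ 2 + r' ^ 2 - 2 * r * r' * t) / 2) :=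
        setIntegral_le_integral hGint
          (by filter_upwards with r using integral_nonneg fun r' => Real.exp_nonneg _)
      linarith
    have hval : (∫ r : ℝ, ∫ r' : ℝ, Real.exp (-(r ^ 2 + r' ^ 2 - 2 * r * r' * t) / 2))
        = 2 * π / Real.sqrt (1 - t ^ 2) := gauss_double t hs
    rw [hval] at step2
    rw [mul_one, mul_one_div]
    exact step2
  -- integrate the bound over t
  have hb : (∫ t in Ioo (0:ℝ) 1, 2 * π * (1 / Real.sqrt (1 - (t * 1) ^ 2))) = π ^ 2 := by
    have := ftc_arcsin 1 one_pos le_rfl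
    simp only [one_mul] at this
    have h2 : ∀ t : ℝ, 2 * π * (1 / Real.sqrt (1 - (t * 1) ^ 2))
        = 2 * π * (1 / Real.sqrt (1 - (t * 1) ^ 2)) := fun _ => rfl
    rw [integral_const_mul, this, Real.arcsin_one]
    ring
  rw [← hb]
  apply integral_mono_of_nonneg
  · filter_upwards with t using
      integral_nonneg fun r => integral_nonneg fun r' => Real.exp_nonneg _
  · exact ((integrable_one_div 1 one_pos le_rfl).const_mul _)
  · filter_upwards [ae_restrict_mem measurableSet_Ioo] with t ht using key t ht


end Aux

/-- `Ψ(α) = 2π arcsin(α)/α ≤ π²` for `0 < α ≤ 1`, and hence `ψ₂ ≤ π²` on `[-1,1]`. -/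
theorem statement4 :
    (∀ α : ℝ, 0 < α → α ≤ 1 →
      bigPsi α = 2 * π * Real.arcsin α / α ∧ bigPsi α ≤ π ^ 2) ∧
    (∀ α ∈ Set.Icc (-1 : ℝ) 1, psiTwo α ≤ π ^ 2) :=
  ⟨fun α h0 h1 => ⟨bigPsi_val α h0 h1, bigPsi_le α h0 h1⟩, fun α hα => psiTwo_le α hα⟩
end

section
/- Let n ≥ 2 and let u : ℝⁿ\{0} → ℝ be a twice continuously differentiable 0-homogeneous function. Then for every unit vector θ ∈ S^{n-1} and for all h ∈ ℝⁿ, ⟨u''(θ)h, h⟩ = ⟨P_{θ⊥} u''(θ) P_{θ⊥} h, h⟩ - 2 ⟨∇u(θ), h⟩ ⟨θ, h⟩, where u''(θ) is the Hessian matrix of u at θ and P_{θ⊥} = I_n - θθᵀ is the orthogonal projection onto the hyperplane orthogonal to θ. Equivalently, as matrices, u''(θ) = P_{θ⊥} u''(θ) P_{θ⊥} - 2 (∇u(θ) ⊗ θ), where v ⊗ w denotes the symmetrized tensor product with entries (v ⊗ w)_{ij} = (v_i w_j + w_i v_j)/2. -/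
open MeasureTheory Real
open scoped RealInnerProductSpace

/-- For a `C²` 0-homogeneous function `u` on `ℝⁿ\{0}`, the Hessian quadratic form
at a unit vector `θ` satisfies
`⟨u''(θ)h, h⟩ = ⟨P_{θ⊥} u''(θ) P_{θ⊥} h, h⟩ - 2⟨∇u(θ), h⟩⟨θ, h⟩`,
where `P_{θ⊥} h = h - ⟨θ, h⟩θ` is the projection onto the hyperplane orthogonal
to `θ`.  (Equivalently, as matrices, `u'' = P u'' P - 2 ∇u ⊗ θ`.) -/
theorem statement10 (n : ℕ) (hn : 2 ≤ n) (u : EuclideanSpace ℝ (Fin n) → ℝ)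
    (hu : ContDiffOn ℝ 2 u {(0 : EuclideanSpace ℝ (Fin n))}ᶜ)
    (huh : ∀ r : ℝ, 0 < r → ∀ x : EuclideanSpace ℝ (Fin n), x ≠ 0 → u (r • x) = u x)
    (θ : EuclideanSpace ℝ (Fin n)) (hθ : ‖θ‖ = 1) (h : EuclideanSpace ℝ (Fin n)) :
    (fderiv ℝ (fderiv ℝ u) θ h) h =
      (fderiv ℝ (fderiv ℝ u) θ (h - ⟪θ, h⟫ • θ)) (h - ⟪θ, h⟫ • θ) -
        2 * fderiv ℝ u θ h * ⟪θ, h⟫ := by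
  have hθ0 : θ ≠ 0 := by
    intro hh
    rw [hh, norm_zero] at hθ
    norm_num at hθ
  have hopen : IsOpen ({(0 : EuclideanSpace ℝ (Fin n))}ᶜ) := isOpen_compl_singleton
  have hCD : ∀ x : EuclideanSpace ℝ (Fin n), x ≠ 0 → ContDiffAt ℝ 2 u x := fun x hx =>
    hu.contDiffAt (hopen.mem_nhds hx)
  have hdiff : ∀ x : EuclideanSpace ℝ (Fin n), x ≠ 0 → DifferentiableAt ℝ u x := fun x hx =>
    (hCD x hx).differentiableAt (by norm_num)
  set L := fderiv ℝ u θ with hL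
  set B := fderiv ℝ (fderiv ℝ u) θ with hB
  -- scaling of the gradient
  have hscale : ∀ r : ℝ, 0 < r → fderiv ℝ u (r • θ) = r⁻¹ • L := by
    intro r hr
    have hrθ : r • θ ≠ 0 := smul_ne_zero (ne_of_gt hr) hθ0
    have heq : (fun x => u (r • x)) =ᶠ[nhds θ] u := by
      filter_upwards [hopen.mem_nhds hθ0] with x hx
      exact huh r hr x hx
    have h2 : HasFDerivAt (fun x => u (r • x))
        ((fderiv ℝ u (r • θ)).comp (r • ContinuousLinearMap.id ℝ (EuclideanSpace ℝ (Fin n)))) θ := by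
      apply (hdiff _ hrθ).hasFDerivAt.comp θ
      have : HasFDerivAt (fun x : EuclideanSpace ℝ (Fin n) => r • x)
          (r • ContinuousLinearMap.id ℝ (EuclideanSpace ℝ (Fin n))) θ :=
        (hasFDerivAt_id θ).const_smul r
      exact this
    have h3 : fderiv ℝ (fun x => u (r • x)) θ = L := heq.fderiv_eq
    have h4 : (fderiv ℝ u (r • θ)).comp (r • ContinuousLinearMap.id ℝ (EuclideanSpace ℝ (Fin n)))
        = L := by rw [← h2.fderiv]; exact h3
    ext v
    have := congrArg (fun (T : EuclideanSpace ℝ (Fin n) →L[ℝ] ℝ) => T v) h4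
    simp only [ContinuousLinearMap.comp_apply, ContinuousLinearMap.smul_apply,
      ContinuousLinearMap.id_apply] at this ⊢
    have hr' : r ≠ 0 := ne_of_gt hr
    rw [ContinuousLinearMap.map_smul, smul_eq_mul] at this
    rw [smul_eq_mul]
    field_simp
    linarith [this]
  -- Euler : L θ = 0
  have hLθ : L θ = 0 := by
    have hc : HasDerivAt (fun r : ℝ => r • θ) θ 1 := by
      simpa using (hasDerivAt_id (1 : ℝ)).smul_const θ
    have hg : HasDerivAt (fun r : ℝ => u (r • θ)) (L θ) 1 := by
      have h1 : HasFDerivAt u L ((1:ℝ) • θ) := by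
        rw [one_smul]; exact (hdiff θ hθ0).hasFDerivAt
      exact h1.comp_hasDerivAt 1 hc
    have hgc : (fun r : ℝ => u (r • θ)) =ᶠ[nhds (1 : ℝ)] fun _ => u θ := by
      filter_upwards [eventually_gt_nhds (by norm_num : (0:ℝ) < 1)] with r hr
      exact huh r hr θ hθ0
    have hg0 : HasDerivAt (fun r : ℝ => u (r • θ)) 0 1 :=
      (hasDerivAt_const (1:ℝ) (u θ)).congr_of_eventuallyEq hgc
    exact hg.unique hg0
  -- B θ = -L
  have hBθ : B θ = -L := by
    have hd2 : DifferentiableAt ℝ (fderiv ℝ u) θ := by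
      have := (hCD θ hθ0).fderiv_right (m := 1) (by norm_num)
      exact this.differentiableAt (by norm_num)
    have hc : HasDerivAt (fun r : ℝ => r • θ) θ 1 := by
      simpa using (hasDerivAt_id (1 : ℝ)).smul_const θ
    have hF : HasDerivAt (fun r : ℝ => fderiv ℝ u (r • θ)) (B θ) 1 := by
      have h1 : HasFDerivAt (fderiv ℝ u) B ((1:ℝ) • θ) := by
        rw [one_smul]; exact hd2.hasFDerivAt
      exact h1.comp_hasDerivAt 1 hc
    have hFc : (fun r : ℝ => fderiv ℝ u (r • θ)) =ᶠ[nhds (1 : ℝ)] fun r => r⁻¹ • L := by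
      filter_upwards [eventually_gt_nhds (by norm_num : (0:ℝ) < 1)] with r hr
      exact hscale r hr
    have hG : HasDerivAt (fun r : ℝ => r⁻¹ • L) (-L) 1 := by
      have := (hasDerivAt_inv (one_ne_zero : (1:ℝ) ≠ 0)).smul_const L
      simpa using this
    have hF' : HasDerivAt (fun r : ℝ => fderiv ℝ u (r • θ)) (-L) 1 :=
      hG.congr_of_eventuallyEq hFc
    exact hF.unique hF'
  -- symmetry of the second derivative
  have hsym : IsSymmSndFDerivAt ℝ u θ := (hCD θ hθ0).isSymmSndFDerivAt (by simp)
  -- algebra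
  set t := ⟪θ, h⟫ with ht
  set w := h - t • θ with hw
  have hh : h = w + t • θ := by rw [hw]; abel
  have e1 : B θ w = -(L w) := by rw [hBθ]; simp
  have e2 : B w θ = -(L w) := by
    have := hsym.eq w θ
    rw [hB] at *
    rw [this, ← hB, e1]
  have e3 : B θ θ = 0 := by rw [hBθ]; simp [hLθ]
  have e4 : L w = L h := by
    rw [hw, map_sub, ContinuousLinearMap.map_smul, smul_eq_mul, hLθ]; ring
  calc (B h) h = B (w + t • θ) (w + t • θ) := by rw [← hh]
    _ = B w w + t * B w θ + (t * B θ w + t * (t * B θ θ)) := by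
        simp only [map_add, ContinuousLinearMap.map_smul, ContinuousLinearMap.add_apply,
          ContinuousLinearMap.smul_apply, smul_eq_mul]
        ring
    _ = B w w - 2 * L h * t := by rw [e1, e2, e3, e4]; ring
end

section
/- Let μ be a Borel probability measure on ℝ with distribution function F(x) = μ((-∞, x]), and define the Höffding kernel H(x,y) = F(min(x,y))·(1 - F(max(x,y))) for x, y ∈ ℝ. Then for all continuously differentiable functions u, v : ℝ → ℝ whose derivatives are compactly supported, u and v are square-integrable with respect to μ and cov_μ(u,v) = ∫_{ℝ}∫_{ℝ} u'(x) v'(y) H(x,y) dx dy. -/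
open MeasureTheory Real
open scoped ENNReal

/-- Multiplying an integrable function by a bounded a.e. strongly measurable
function preserves integrability. -/
private lemma integrable_mul_bdd {α : Type*} [MeasurableSpace α] {ν : Measure α}
    {g c : α → ℝ} (hg : Integrable g ν) (hc : AEStronglyMeasurable c ν)
    (h1 : ∀ x, |c x| ≤ 1) : Integrable (fun x => g x * c x) ν :=
  hg.norm.mono' (hg.aestronglyMeasurable.mul hc) (ae_of_all _ fun x => by
    rw [norm_mul]
    exact mul_le_of_le_one_right (norm_nonneg _)
      (by simpa [Real.norm_eq_abs] using h1 x))

/-- Fundamental theorem of calculus representation of a `C¹` function with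
compactly supported derivative. -/
private lemma keyA {w : ℝ → ℝ} (hw : ContDiff ℝ 1 w) (hw' : HasCompactSupport (deriv w))
    {b : ℝ} (hb : tsupport (deriv w) ⊆ Set.Icc (-b) b) (t : ℝ) :
    w b - w t = ∫ x, deriv w x * Set.indicator (Set.Iic x) (fun _ => (1:ℝ)) t := by
  have hc : Continuous (deriv w) := hw.continuous_deriv le_rfl
  have hint : Integrable (deriv w) (volume : Measure ℝ) :=
    hc.integrable_of_hasCompactSupport hw'
  have hzero : ∀ x, b < x → deriv w x = 0 := fun x hx =>
    image_eq_zero_of_notMem_tsupport (fun hmem => absurd (hb hmem).2 (not_le.mpr hx))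
  have heq : (fun x => deriv w x * Set.indicator (Set.Iic x) (fun _ => (1:ℝ)) t)
      = Set.indicator (Set.Ici t) (deriv w) := by
    funext x
    by_cases h : t ≤ x <;> simp [Set.indicator_apply, h]
  have hIoi : ∫ x in Set.Ioi b, deriv w x = 0 :=
    setIntegral_eq_zero_of_forall_eq_zero fun x hx => hzero x hx
  rw [heq, integral_indicator measurableSet_Ici, integral_Ici_eq_integral_Ioi]
  rcases le_or_gt t b with h | h
  · rw [← Set.Ioc_union_Ioi_eq_Ioi h,
      setIntegral_union (Set.Ioc_disjoint_Ioi le_rfl) measurableSet_Ioi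
        hint.integrableOn hint.integrableOn, hIoi, add_zero,
      ← intervalIntegral.integral_of_le h,
      intervalIntegral.integral_deriv_eq_sub
        (fun x _ => (hw.differentiable one_ne_zero).differentiableAt)
        (hc.intervalIntegrable t b)]
  · have h1 : ∫ x in Set.Ioi t, deriv w x = 0 :=
      setIntegral_eq_zero_of_forall_eq_zero fun x hx => hzero x (h.trans hx)
    have h2 : w t = w b := by
      have h3 := intervalIntegral.integral_deriv_eq_sub (f := w)
        (fun x _ => (hw.differentiable one_ne_zero).differentiableAt) (hc.intervalIntegrable b t)
      rw [intervalIntegral.integral_of_le h.le,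
        setIntegral_eq_zero_of_forall_eq_zero (fun x hx => hzero x hx.1)] at h3
      linarith
    rw [h1, h2, sub_self]

/-- A `C¹` function with compactly supported derivative is globally bounded. -/
private lemma keyBound {w : ℝ → ℝ} (hw : ContDiff ℝ 1 w) (hw' : HasCompactSupport (deriv w))
    {b : ℝ} (hb : tsupport (deriv w) ⊆ Set.Icc (-b) b) (t : ℝ) :
    ‖w t‖ ≤ ‖w b‖ + ∫ x, ‖deriv w x‖ := by
  have hc : Continuous (deriv w) := hw.continuous_deriv le_rfl
  have hint : Integrable (deriv w) (volume : Measure ℝ) :=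
    hc.integrable_of_hasCompactSupport hw'
  have h := keyA hw hw' hb t
  have h2 : ‖w b - w t‖ ≤ ∫ x, ‖deriv w x‖ := by
    rw [h]
    refine (norm_integral_le_integral_norm _).trans ?_
    refine integral_mono_of_nonneg (ae_of_all _ fun x => norm_nonneg _) hint.norm
      (ae_of_all _ fun x => ?_)
    dsimp only
    rw [norm_mul]
    refine mul_le_of_le_one_right (norm_nonneg _) ?_
    by_cases hx : t ≤ x <;> simp [Set.indicator_apply, hx]
  calc ‖w t‖ = ‖w b - (w b - w t)‖ := by ring_nf
    _ ≤ ‖w b‖ + ‖w b - w t‖ := norm_sub_le _ _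
    _ ≤ ‖w b‖ + ∫ x, ‖deriv w x‖ := by linarith

/-- First moment identity. -/
private lemma keyB (μ : Measure ℝ) [IsProbabilityMeasure μ]
    {w : ℝ → ℝ} (hw : ContDiff ℝ 1 w) (hw' : HasCompactSupport (deriv w))
    {b : ℝ} (hb : tsupport (deriv w) ⊆ Set.Icc (-b) b) :
    ∫ t, (w b - w t) ∂μ = ∫ x, deriv w x * (μ (Set.Iic x)).toReal := by
  have hc : Continuous (deriv w) := hw.continuous_deriv le_rfl
  have hint : Integrable (deriv w) (volume : Measure ℝ) :=
    hc.integrable_of_hasCompactSupport hw'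
  have hS : MeasurableSet {z : ℝ × ℝ | z.1 ≤ z.2} :=
    measurableSet_le measurable_fst measurable_snd
  have hfun : Function.uncurry (fun t x => deriv w x * Set.indicator (Set.Iic x)
        (fun _ => (1:ℝ)) t)
      = fun z : ℝ × ℝ => deriv w z.2 *
          Set.indicator {z : ℝ × ℝ | z.1 ≤ z.2} (fun _ => (1:ℝ)) z := by
    funext z
    by_cases h : z.1 ≤ z.2 <;> simp [Function.uncurry, Set.indicator_apply, h]
  have hmeas : AEStronglyMeasurable (Function.uncurry fun t x =>
      deriv w x * Set.indicator (Set.Iic x) (fun _ => (1:ℝ)) t) (μ.prod volume) := by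
    rw [hfun]
    exact ((hc.measurable.comp measurable_snd).mul
      (measurable_const.indicator hS)).aestronglyMeasurable
  have hmaj : Integrable (fun z : ℝ × ℝ => ‖deriv w z.2‖) (μ.prod volume) := by
    simpa using (integrable_const (1:ℝ) (μ := μ)).mul_prod hint.norm
  have hintegr : Integrable (Function.uncurry fun t x =>
      deriv w x * Set.indicator (Set.Iic x) (fun _ => (1:ℝ)) t) (μ.prod volume) := by
    refine hmaj.mono' hmeas (ae_of_all _ fun z => ?_)
    rw [Function.uncurry, norm_mul]
    refine mul_le_of_le_one_right (norm_nonneg _) ?_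
    by_cases h : z.1 ≤ z.2 <;> simp [Set.indicator_apply, h]
  calc ∫ t, (w b - w t) ∂μ
      = ∫ t, ∫ x, deriv w x * Set.indicator (Set.Iic x) (fun _ => (1:ℝ)) t ∂volume ∂μ := by
        refine integral_congr_ae (ae_of_all _ fun t => ?_)
        exact keyA hw hw' hb t
    _ = ∫ x, ∫ t, deriv w x * Set.indicator (Set.Iic x) (fun _ => (1:ℝ)) t ∂μ ∂volume :=
        integral_integral_swap hintegr
    _ = ∫ x, deriv w x * (μ (Set.Iic x)).toReal := by
        refine integral_congr_ae (ae_of_all _ fun x => ?_)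
        dsimp only
        rw [integral_const_mul, integral_indicator_const _ measurableSet_Iic]
        simp [Measure.real]

/-- Second moment identity. -/
private lemma keyC (μ : Measure ℝ) [IsProbabilityMeasure μ]
    {w z : ℝ → ℝ} (hw : ContDiff ℝ 1 w) (hw' : HasCompactSupport (deriv w))
    (hz : ContDiff ℝ 1 z) (hz' : HasCompactSupport (deriv z))
    {b : ℝ} (hbw : tsupport (deriv w) ⊆ Set.Icc (-b) b)
    (hbz : tsupport (deriv z) ⊆ Set.Icc (-b) b) :
    ∫ t, (w b - w t) * (z b - z t) ∂μ
      = ∫ p : ℝ × ℝ, deriv w p.1 * deriv z p.2 *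
          (μ (Set.Iic (min p.1 p.2))).toReal ∂(volume.prod volume) := by
  have hcw : Continuous (deriv w) := hw.continuous_deriv le_rfl
  have hcz : Continuous (deriv z) := hz.continuous_deriv le_rfl
  have hintw : Integrable (deriv w) (volume : Measure ℝ) :=
    hcw.integrable_of_hasCompactSupport hw'
  have hintz : Integrable (deriv z) (volume : Measure ℝ) :=
    hcz.integrable_of_hasCompactSupport hz'
  have hpt : ∀ t, (w b - w t) * (z b - z t)
      = ∫ p : ℝ × ℝ, deriv w p.1 * deriv z p.2 *
          Set.indicator (Set.Iic (min p.1 p.2)) (fun _ => (1:ℝ)) t ∂(volume.prod volume) := by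
    intro t
    rw [keyA hw hw' hbw t, keyA hz hz' hbz t, ← integral_prod_mul]
    refine integral_congr_ae (ae_of_all _ fun p => ?_)
    by_cases h1 : t ≤ p.1 <;> by_cases h2 : t ≤ p.2 <;>
      simp [Set.indicator_apply, h1, h2, le_min_iff]
  have hT : MeasurableSet {q : ℝ × (ℝ × ℝ) | q.1 ≤ min q.2.1 q.2.2} := by
    have heq : {q : ℝ × (ℝ × ℝ) | q.1 ≤ min q.2.1 q.2.2}
        = {q : ℝ × (ℝ × ℝ) | q.1 ≤ q.2.1} ∩ {q : ℝ × (ℝ × ℝ) | q.1 ≤ q.2.2} := by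
      ext q; simp [le_min_iff]
    rw [heq]
    exact (measurableSet_le measurable_fst (measurable_fst.comp measurable_snd)).inter
      (measurableSet_le measurable_fst (measurable_snd.comp measurable_snd))
  have hfun : Function.uncurry (fun t (p : ℝ × ℝ) => deriv w p.1 * deriv z p.2 *
        Set.indicator (Set.Iic (min p.1 p.2)) (fun _ => (1:ℝ)) t)
      = fun q : ℝ × (ℝ × ℝ) => deriv w q.2.1 * deriv z q.2.2 *
          Set.indicator {q : ℝ × (ℝ × ℝ) | q.1 ≤ min q.2.1 q.2.2} (fun _ => (1:ℝ)) q := by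
    funext q
    by_cases h1 : q.1 ≤ q.2.1 <;> by_cases h2 : q.1 ≤ q.2.2 <;>
      simp [Function.uncurry, Set.indicator_apply, le_min_iff, h1, h2]
  have hmeas : AEStronglyMeasurable (Function.uncurry fun t (p : ℝ × ℝ) =>
      deriv w p.1 * deriv z p.2 *
        Set.indicator (Set.Iic (min p.1 p.2)) (fun _ => (1:ℝ)) t)
      (μ.prod (volume.prod volume)) := by
    rw [hfun]
    exact (((hcw.measurable.comp (measurable_fst.comp measurable_snd)).mul
      (hcz.measurable.comp (measurable_snd.comp measurable_snd))).mul
      (measurable_const.indicator hT)).aestronglyMeasurable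
  have hmaj : Integrable (fun q : ℝ × (ℝ × ℝ) => ‖deriv w q.2.1 * deriv z q.2.2‖)
      (μ.prod (volume.prod volume)) := by
    simpa using (integrable_const (1:ℝ) (μ := μ)).mul_prod (hintw.mul_prod hintz).norm
  have hintegr : Integrable (Function.uncurry fun t (p : ℝ × ℝ) =>
      deriv w p.1 * deriv z p.2 *
        Set.indicator (Set.Iic (min p.1 p.2)) (fun _ => (1:ℝ)) t)
      (μ.prod (volume.prod volume)) := by
    refine hmaj.mono' hmeas (ae_of_all _ fun q => ?_)
    rw [Function.uncurry, norm_mul]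
    refine mul_le_of_le_one_right (norm_nonneg _) ?_
    by_cases h : q.1 ≤ min q.2.1 q.2.2 <;> simp [Set.indicator_apply, h]
  calc ∫ t, (w b - w t) * (z b - z t) ∂μ
      = ∫ t, ∫ p : ℝ × ℝ, deriv w p.1 * deriv z p.2 *
          Set.indicator (Set.Iic (min p.1 p.2)) (fun _ => (1:ℝ)) t
          ∂(volume.prod volume) ∂μ := by
        exact integral_congr_ae (ae_of_all _ fun t => hpt t)
    _ = ∫ p : ℝ × ℝ, ∫ t, deriv w p.1 * deriv z p.2 *
          Set.indicator (Set.Iic (min p.1 p.2)) (fun _ => (1:ℝ)) t ∂μ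
          ∂(volume.prod volume) := integral_integral_swap hintegr
    _ = ∫ p : ℝ × ℝ, deriv w p.1 * deriv z p.2 *
          (μ (Set.Iic (min p.1 p.2))).toReal ∂(volume.prod volume) := by
        refine integral_congr_ae (ae_of_all _ fun p => ?_)
        dsimp only
        rw [integral_const_mul, integral_indicator_const _ measurableSet_Iic]
        simp [Measure.real]

/-- Höffding's covariance representation on the real line: for a probability
measure `μ` with distribution function `F` and Höffding kernel
`H(x,y) = F(x∧y)(1 - F(x∨y))`, every pair of `C¹` functions with compactly
supported derivatives is square-integrable and
`cov_μ(u,v) = ∫∫ u'(x) v'(y) H(x,y) dx dy`. -/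
theorem statement18 (μ : Measure ℝ) [IsProbabilityMeasure μ]
    (F : ℝ → ℝ) (hF : ∀ x, F x = (μ (Set.Iic x)).toReal)
    (H : ℝ → ℝ → ℝ) (hH : ∀ x y, H x y = F (min x y) * (1 - F (max x y)))
    (u v : ℝ → ℝ) (hu : ContDiff ℝ 1 u) (hv : ContDiff ℝ 1 v)
    (hu' : HasCompactSupport (deriv u)) (hv' : HasCompactSupport (deriv v)) :
    MemLp u 2 μ ∧ MemLp v 2 μ ∧
      (∫ x, u x * v x ∂μ) - (∫ x, u x ∂μ) * (∫ x, v x ∂μ) =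
        ∫ x : ℝ, ∫ y : ℝ, deriv u x * deriv v y * H x y := by
  -- a common bound on the supports
  obtain ⟨r₁, hr₁⟩ := hu'.isBounded.subset_closedBall 0
  obtain ⟨r₂, hr₂⟩ := hv'.isBounded.subset_closedBall 0
  set b : ℝ := max r₁ r₂ with hbdef
  have hb1 : r₁ ≤ b := le_max_left r₁ r₂
  have hb2 : r₂ ≤ b := le_max_right r₁ r₂
  have hbu : tsupport (deriv u) ⊆ Set.Icc (-b) b := by
    intro x hx
    have h := hr₁ hx
    rw [Real.closedBall_eq_Icc] at h
    simp only [Set.mem_Icc] at h ⊢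
    constructor <;> linarith [h.1, h.2]
  have hbv : tsupport (deriv v) ⊆ Set.Icc (-b) b := by
    intro x hx
    have h := hr₂ hx
    rw [Real.closedBall_eq_Icc] at h
    simp only [Set.mem_Icc] at h ⊢
    constructor <;> linarith [h.1, h.2]
  have hcu : Continuous (deriv u) := hu.continuous_deriv le_rfl
  have hcv : Continuous (deriv v) := hv.continuous_deriv le_rfl
  have hintu : Integrable (deriv u) (volume : Measure ℝ) :=
    hcu.integrable_of_hasCompactSupport hu'
  have hintv : Integrable (deriv v) (volume : Measure ℝ) :=
    hcv.integrable_of_hasCompactSupport hv'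
  set Cu : ℝ := ‖u b‖ + ∫ x, ‖deriv u x‖ with hCu
  set Cv : ℝ := ‖v b‖ + ∫ x, ‖deriv v x‖ with hCv
  have hCu0 : 0 ≤ Cu := add_nonneg (norm_nonneg _) (integral_nonneg fun x => norm_nonneg _)
  have hCv0 : 0 ≤ Cv := add_nonneg (norm_nonneg _) (integral_nonneg fun x => norm_nonneg _)
  have hubd : ∀ t, ‖u t‖ ≤ Cu := fun t => keyBound hu hu' hbu t
  have hvbd : ∀ t, ‖v t‖ ≤ Cv := fun t => keyBound hv hv' hbv t
  have hmu : MemLp u 2 μ :=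
    MemLp.of_bound hu.continuous.aestronglyMeasurable Cu (ae_of_all _ hubd)
  have hmv : MemLp v 2 μ :=
    MemLp.of_bound hv.continuous.aestronglyMeasurable Cv (ae_of_all _ hvbd)
  refine ⟨hmu, hmv, ?_⟩
  -- basic integrabilities on μ
  have Iu : Integrable u μ :=
    (integrable_const Cu).mono' hu.continuous.aestronglyMeasurable (ae_of_all _ hubd)
  have Iv : Integrable v μ :=
    (integrable_const Cv).mono' hv.continuous.aestronglyMeasurable (ae_of_all _ hvbd)
  have Iuv : Integrable (fun t => u t * v t) μ := by
    refine (integrable_const (Cu * Cv)).mono'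
      (hu.continuous.mul hv.continuous).aestronglyMeasurable (ae_of_all _ fun t => ?_)
    rw [norm_mul]
    exact mul_le_mul (hubd t) (hvbd t) (norm_nonneg _) hCu0
  -- the distribution function
  set G : ℝ → ℝ := fun r => (μ (Set.Iic r)).toReal with hG
  have hGm : Measurable G := by
    refine Monotone.measurable fun a c hac => ?_
    exact ENNReal.toReal_mono (measure_ne_top μ _) (measure_mono (Set.Iic_subset_Iic.mpr hac))
  have hG1 : ∀ r, |G r| ≤ 1 := by
    intro r
    rw [abs_of_nonneg ENNReal.toReal_nonneg]
    calc (μ (Set.Iic r)).toReal ≤ (1 : ℝ≥0∞).toReal :=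
          ENNReal.toReal_mono ENNReal.one_ne_top prob_le_one
      _ = 1 := by simp
  -- H in terms of G
  have hHeq : ∀ x y, H x y = G (min x y) - G x * G y := by
    intro x y
    rcases le_total x y with h | h
    · rw [hH x y, min_eq_left h, max_eq_right h, hF, hF]
      simp only [hG, min_eq_left h]
      ring
    · rw [hH x y, min_eq_right h, max_eq_left h, hF, hF]
      simp only [hG, min_eq_right h]
      ring
  -- integrabilities on the product space
  have Ip : Integrable (fun p : ℝ × ℝ => deriv u p.1 * deriv v p.2) (volume.prod volume) :=
    hintu.mul_prod hintv
  have IGmin : Integrable (fun p : ℝ × ℝ => deriv u p.1 * deriv v p.2 * G (min p.1 p.2))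
      (volume.prod volume) := by
    refine integrable_mul_bdd Ip ?_ fun p => hG1 _
    exact (hGm.comp (measurable_fst.min measurable_snd)).aestronglyMeasurable
  have IuG : Integrable (fun x => deriv u x * G x) (volume : Measure ℝ) :=
    integrable_mul_bdd hintu hGm.aestronglyMeasurable hG1
  have IvG : Integrable (fun y => deriv v y * G y) (volume : Measure ℝ) :=
    integrable_mul_bdd hintv hGm.aestronglyMeasurable hG1
  have IGG : Integrable (fun p : ℝ × ℝ => (deriv u p.1 * G p.1) * (deriv v p.2 * G p.2))
      (volume.prod volume) := IuG.mul_prod IvG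
  have IH : Integrable (fun p : ℝ × ℝ => deriv u p.1 * deriv v p.2 * H p.1 p.2)
      (volume.prod volume) := by
    have : (fun p : ℝ × ℝ => deriv u p.1 * deriv v p.2 * H p.1 p.2)
        = fun p : ℝ × ℝ => deriv u p.1 * deriv v p.2 * G (min p.1 p.2)
            - (deriv u p.1 * G p.1) * (deriv v p.2 * G p.2) := by
      funext p; rw [hHeq]; ring
    rw [this]
    exact IGmin.sub IGG
  -- the RHS as a product-space integral
  have hRHS : (∫ x : ℝ, ∫ y : ℝ, deriv u x * deriv v y * H x y)
      = (∫ p : ℝ × ℝ, deriv u p.1 * deriv v p.2 * G (min p.1 p.2) ∂(volume.prod volume))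
        - (∫ x, deriv u x * G x) * (∫ y, deriv v y * G y) := by
    rw [← integral_prod _ IH, ← integral_prod_mul]
    rw [← integral_sub IGmin IGG]
    refine integral_congr_ae (ae_of_all _ fun p => ?_)
    dsimp only
    rw [hHeq]; ring
  -- expansion of the covariance
  have E1 : ∫ t, (u b - u t) * (v b - v t) ∂μ
      = u b * v b - u b * (∫ t, v t ∂μ) - v b * (∫ t, u t ∂μ) + ∫ t, u t * v t ∂μ := by
    have h1 : Integrable (fun t => u b * v b - u b * v t) μ :=
      (integrable_const _).sub (Iv.const_mul _)
    have h2 : Integrable (fun t => u b * v b - u b * v t - v b * u t) μ :=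
      h1.sub (Iu.const_mul _)
    calc ∫ t, (u b - u t) * (v b - v t) ∂μ
        = ∫ t, (u b * v b - u b * v t - v b * u t + u t * v t) ∂μ := by
          refine integral_congr_ae (ae_of_all _ fun t => ?_); ring
      _ = u b * v b - u b * (∫ t, v t ∂μ) - v b * (∫ t, u t ∂μ) + ∫ t, u t * v t ∂μ := by
          rw [integral_add h2 Iuv, integral_sub h1 (Iu.const_mul _),
            integral_sub (integrable_const _) (Iv.const_mul _), integral_const,
            integral_const_mul, integral_const_mul]
          simp
  have E2 : ∫ t, (u b - u t) ∂μ = u b - ∫ t, u t ∂μ := by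
    rw [integral_sub (integrable_const _) Iu, integral_const]; simp
  have E3 : ∫ t, (v b - v t) ∂μ = v b - ∫ t, v t ∂μ := by
    rw [integral_sub (integrable_const _) Iv, integral_const]; simp
  have KB1 := keyB μ hu hu' hbu
  have KB2 := keyB μ hv hv' hbv
  have KC := keyC μ hu hu' hv hv' hbu hbv
  rw [hRHS, ← KC]
  have : (∫ x, deriv u x * G x) = u b - ∫ t, u t ∂μ := by rw [← E2, KB1]
  have h2 : (∫ y, deriv v y * G y) = v b - ∫ t, v t ∂μ := by rw [← E3, KB2]
  rw [this, h2, E1]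
  ring
end
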